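/- Let μ be a finite nonnegative Borel measure on [0,∞) and ν > 0. Define |||μ|||_ν^2 := sup_{t>0} t^{-2ν} μ([0,t)). Then for every Λ > 0 and every γ > ν, μ([0,Λ)) + Λ^{2γ} ∫_{[Λ,∞)} λ^{-2γ} dμ(λ) ≤ (γ/(γ-ν)) · Λ^{2ν} · |||μ|||_ν^2, whenever |||μ|||_ν is finite. -/

import Mathlib

open MeasureTheory Set ENNReal

/-- Lemma for measures, part 1.  `μ` a finite Borel measure on `[0,∞)`, `ν > 0`,
`M² ≥ |||μ|||_ν² = sup_{t>0} t^(-2ν) μ([0,t))` (finite).  Then for `Λ > 0`, `γ > ν`: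
`μ([0,Λ)) + Λ^(2γ) ∫_{[Λ,∞)} λ^(-2γ) dμ ≤ (γ/(γ-ν)) Λ^(2ν) M²`. -/
theorem stmt4 (μ : Measure ℝ) [IsFiniteMeasure μ] (hsupp : μ (Iio 0) = 0)
    (ν : ℝ) (hν : 0 < ν) (M : ℝ)
    (hM : ∀ t > 0, (μ (Ico 0 t)).toReal ≤ t ^ (2*ν) * M ^ 2)
    (Λ γ : ℝ) (hΛ : 0 < Λ) (hγ : ν < γ) :
    (μ (Ico 0 Λ)).toReal + Λ ^ (2*γ) * ∫ l in Ici Λ, l ^ (-(2*γ)) ∂μ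
      ≤ γ / (γ - ν) * (Λ ^ (2*ν) * M ^ 2) := by
  have hγ0 : 0 < γ := hν.trans hγ
  set g : ℝ → ℝ≥0∞ := fun t => ENNReal.ofReal (2*γ * t ^ (-(2*γ)-1)) with hg
  have hgmeas : Measurable g := by
    exact ENNReal.measurable_ofReal.comp ((measurable_id.pow measurable_const).const_mul _)
  -- Step A : for x > 0, ∫⁻ t in Ioi x, g t = ofReal (x ^ (-(2γ)))
  have stepA : ∀ x : ℝ, 0 < x → ∫⁻ t in Ioi x, g t = ENNReal.ofReal (x ^ (-(2*γ))) := by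
    intro x hx
    have hint : IntegrableOn (fun t : ℝ => 2*γ * t ^ (-(2*γ)-1)) (Ioi x) := by
      exact (integrableOn_Ioi_rpow_of_lt (by linarith) hx).const_mul _
    have hnn : 0 ≤ᵐ[volume.restrict (Ioi x)] fun t : ℝ => 2*γ * t ^ (-(2*γ)-1) := by
      filter_upwards [ae_restrict_mem measurableSet_Ioi] with t ht
      have : (0:ℝ) < t := hx.trans ht
      positivity
    rw [← ofReal_integral_eq_lintegral_ofReal hint hnn,
      MeasureTheory.integral_const_mul, integral_Ioi_rpow_of_lt (by linarith) hx]
    congr 1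
    have h1 : -(2*γ)-1+1 = -(2*γ) := by ring
    rw [h1]
    field_simp
  -- Fubini step
  have fub : ∫⁻ x in Ici Λ, ENNReal.ofReal (x ^ (-(2*γ))) ∂μ
      = ∫⁻ t in Ioi Λ, g t * μ (Ico Λ t) := by
    have hmeas : Measurable (Function.uncurry fun (x t : ℝ) => if x < t then g t else 0) := by
      exact Measurable.ite (measurableSet_lt measurable_fst measurable_snd)
        (hgmeas.comp measurable_snd) measurable_const
    calc ∫⁻ x in Ici Λ, ENNReal.ofReal (x ^ (-(2*γ))) ∂μ
        = ∫⁻ x in Ici Λ, (∫⁻ t in Ioi Λ, if x < t then g t else 0) ∂μ := by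
          refine setLIntegral_congr_fun measurableSet_Ici ?_
          intro x hx
          beta_reduce
          have h1 : (fun t => if x < t then g t else 0) = (Ioi x).indicator g := by
            ext t; simp [indicator, mem_Ioi]
          rw [h1, lintegral_indicator measurableSet_Ioi,
            Measure.restrict_restrict measurableSet_Ioi,
            Ioi_inter_Ioi, max_eq_left hx, stepA x (hΛ.trans_le hx)]
      _ = ∫⁻ t in Ioi Λ, (∫⁻ x in Ici Λ, if x < t then g t else 0 ∂μ) := by
          exact lintegral_lintegral_swap hmeas.aemeasurable
      _ = ∫⁻ t in Ioi Λ, g t * μ (Ico Λ t) := by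
          refine setLIntegral_congr_fun measurableSet_Ioi ?_
          intro t ht
          beta_reduce
          have h1 : (fun x => if x < t then g t else 0) = (Iio t).indicator (fun _ => g t) := by
            ext x; simp [indicator, mem_Iio]
          rw [h1, lintegral_indicator measurableSet_Iio, setLIntegral_const,
            Measure.restrict_apply measurableSet_Iio, inter_comm, Ici_inter_Iio]
  -- key identity
  have key : ENNReal.ofReal (Λ ^ (-(2*γ))) * μ (Ico 0 Λ)
        + ∫⁻ x in Ici Λ, ENNReal.ofReal (x ^ (-(2*γ))) ∂μ
      = ∫⁻ t in Ioi Λ, g t * μ (Ico 0 t) := by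
    have h1 : ∀ t ∈ Ioi Λ, g t * μ (Ico 0 t) = g t * μ (Ico 0 Λ) + g t * μ (Ico Λ t) := by
      intro t ht
      rw [← mul_add]
      congr 1
      rw [← measure_union (Ico_disjoint_Ico.mpr (by
          rw [min_eq_left (le_of_lt ht), max_eq_right hΛ.le])) measurableSet_Ico,
        Ico_union_Ico_eq_Ico hΛ.le (le_of_lt ht)]
    rw [setLIntegral_congr_fun measurableSet_Ioi (fun t ht => h1 t ht),
      lintegral_add_left (hgmeas.mul_const _)]
    rw [lintegral_mul_const _ hgmeas, stepA Λ hΛ, fub, mul_comm]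
  -- pointwise bound for the last integrand
  have hbound : ∀ t ∈ Ioi Λ, g t * μ (Ico 0 t)
      ≤ ENNReal.ofReal (2*γ * M^2 * t ^ (2*ν-(2*γ)-1)) := by
    intro t ht
    have ht0 : (0:ℝ) < t := hΛ.trans ht
    have hμt : μ (Ico 0 t) ≤ ENNReal.ofReal (t ^ (2*ν) * M ^ 2) := by
      rw [← ENNReal.ofReal_toReal (measure_ne_top μ _)]
      exact ENNReal.ofReal_le_ofReal (hM t ht0)
    calc g t * μ (Ico 0 t)
        ≤ ENNReal.ofReal (2*γ * t ^ (-(2*γ)-1)) * ENNReal.ofReal (t ^ (2*ν) * M ^ 2) :=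
          mul_le_mul_right hμt _
      _ = ENNReal.ofReal (2*γ * t ^ (-(2*γ)-1) * (t ^ (2*ν) * M ^ 2)) := by
          rw [← ENNReal.ofReal_mul (by positivity)]
      _ = ENNReal.ofReal (2*γ * M^2 * t ^ (2*ν-(2*γ)-1)) := by
          congr 1
          rw [show 2*ν-(2*γ)-1 = (-(2*γ)-1) + 2*ν by ring, Real.rpow_add ht0]
          ring
  -- compute the dominating integral
  have hdom : ∫⁻ t in Ioi Λ, ENNReal.ofReal (2*γ * M^2 * t ^ (2*ν-(2*γ)-1))
      = ENNReal.ofReal (γ/(γ-ν) * M^2 * Λ ^ (2*ν-(2*γ))) := by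
    have hexp : (2*ν-(2*γ)-1 : ℝ) < -1 := by linarith
    have hint : IntegrableOn (fun t : ℝ => 2*γ*M^2 * t ^ (2*ν-(2*γ)-1)) (Ioi Λ) :=
      (integrableOn_Ioi_rpow_of_lt hexp hΛ).const_mul _
    have hnn : 0 ≤ᵐ[volume.restrict (Ioi Λ)] fun t : ℝ => 2*γ*M^2 * t ^ (2*ν-(2*γ)-1) := by
      filter_upwards [ae_restrict_mem measurableSet_Ioi] with t ht
      have : (0:ℝ) < t := hΛ.trans ht
      positivity
    rw [← ofReal_integral_eq_lintegral_ofReal hint hnn,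
      MeasureTheory.integral_const_mul, integral_Ioi_rpow_of_lt hexp hΛ]
    congr 1
    have h1 : 2*ν-(2*γ)-1+1 = 2*ν-(2*γ) := by ring
    rw [h1]
    have h2 : 2*ν-(2*γ) ≠ 0 := by intro h; linarith
    have h3 : γ - ν ≠ 0 := by intro h; linarith
    field_simp
    have h4 : ν - γ ≠ 0 := by intro h; linarith
    rw [show -(M^2*(γ-ν)/(ν-γ)) = M^2 * ((ν-γ)/(ν-γ)) by ring, div_self h4, mul_one]
  -- main ENNReal inequality
  have main : μ (Ico 0 Λ) + ENNReal.ofReal (Λ ^ (2*γ))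
        * ∫⁻ x in Ici Λ, ENNReal.ofReal (x ^ (-(2*γ))) ∂μ
      ≤ ENNReal.ofReal (γ/(γ-ν) * (Λ ^ (2*ν) * M^2)) := by
    have hΛcancel : ENNReal.ofReal (Λ ^ (2*γ)) * ENNReal.ofReal (Λ ^ (-(2*γ))) = 1 := by
      rw [← ENNReal.ofReal_mul (by positivity), ← Real.rpow_add hΛ]
      norm_num
    calc μ (Ico 0 Λ) + ENNReal.ofReal (Λ ^ (2*γ))
          * ∫⁻ x in Ici Λ, ENNReal.ofReal (x ^ (-(2*γ))) ∂μ
        = ENNReal.ofReal (Λ ^ (2*γ)) * (ENNReal.ofReal (Λ ^ (-(2*γ))) * μ (Ico 0 Λ)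
            + ∫⁻ x in Ici Λ, ENNReal.ofReal (x ^ (-(2*γ))) ∂μ) := by
          rw [mul_add, ← mul_assoc, hΛcancel, one_mul]
      _ = ENNReal.ofReal (Λ ^ (2*γ)) * ∫⁻ t in Ioi Λ, g t * μ (Ico 0 t) := by rw [key]
      _ ≤ ENNReal.ofReal (Λ ^ (2*γ))
            * ∫⁻ t in Ioi Λ, ENNReal.ofReal (2*γ * M^2 * t ^ (2*ν-(2*γ)-1)) := by
          refine mul_le_mul_right ?_ _
          exact setLIntegral_mono_ae (by fun_prop) (Filter.Eventually.of_forall hbound)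
      _ = ENNReal.ofReal (γ/(γ-ν) * (Λ ^ (2*ν) * M^2)) := by
          rw [hdom, ← ENNReal.ofReal_mul (by positivity)]
          congr 1
          rw [show 2*ν-(2*γ) = 2*ν + -(2*γ) by ring, Real.rpow_add hΛ]
          have hc : Λ ^ (2*γ) * Λ ^ (-(2*γ)) = 1 := by
            rw [← Real.rpow_add hΛ]; norm_num
          linear_combination (γ/(γ-ν) * M^2 * Λ ^ (2*ν)) * hc
  -- convert to real numbers
  set F : ℝ≥0∞ := ∫⁻ x in Ici Λ, ENNReal.ofReal (x ^ (-(2*γ))) ∂μ with hF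
  have hFtop : F ≠ ⊤ := by
    have hle : F ≤ ENNReal.ofReal (Λ ^ (-(2*γ))) * μ (Ici Λ) := by
      rw [← setLIntegral_const]
      refine setLIntegral_mono_ae (by fun_prop) (Filter.Eventually.of_forall ?_)
      intro x hx
      exact ENNReal.ofReal_le_ofReal
        (Real.rpow_le_rpow_of_nonpos hΛ hx (by linarith))
    exact ne_top_of_le_ne_top (ENNReal.mul_ne_top ENNReal.ofReal_ne_top
      (measure_ne_top μ _)) hle
  have hintR : ∫ l in Ici Λ, l ^ (-(2*γ)) ∂μ = F.toReal := by
    rw [hF, integral_eq_lintegral_of_nonneg_ae]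
    · filter_upwards [ae_restrict_mem measurableSet_Ici] with x hx
      exact Real.rpow_nonneg (hΛ.le.trans hx) _
    · exact (measurable_id.pow measurable_const).aestronglyMeasurable
  have hLHS : (μ (Ico 0 Λ)).toReal + Λ ^ (2*γ) * ∫ l in Ici Λ, l ^ (-(2*γ)) ∂μ
      = (μ (Ico 0 Λ) + ENNReal.ofReal (Λ ^ (2*γ)) * F).toReal := by
    rw [hintR, ENNReal.toReal_add (measure_ne_top μ _)
      (ENNReal.mul_ne_top ENNReal.ofReal_ne_top hFtop), ENNReal.toReal_mul,
      ENNReal.toReal_ofReal (by positivity)]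
  rw [hLHS]
  have hRHS : (0:ℝ) ≤ γ / (γ - ν) * (Λ ^ (2*ν) * M ^ 2) := by
    have : (0:ℝ) < γ - ν := by linarith
    positivity
  calc (μ (Ico 0 Λ) + ENNReal.ofReal (Λ ^ (2*γ)) * F).toReal
      ≤ (ENNReal.ofReal (γ/(γ-ν) * (Λ ^ (2*ν) * M^2))).toReal :=
        ENNReal.toReal_mono ENNReal.ofReal_ne_top main
    _ = γ / (γ - ν) * (Λ ^ (2*ν) * M ^ 2) := ENNReal.toReal_ofReal hRHS
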